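/- Under the assumptions of the semiboundedness theorem, suppose additionally there exist α ∈ (0,1], μ ≤ min σ(A₀) and C > 0 such that ‖\overline{M(λ)}‖ ≤ C/(μ−λ)^α for all λ < μ. Then min σ(A_[B]) ≥ μ − (C‖B₊‖)^{1/α}. -/

import Mathlib

open scoped InnerProductSpace

namespace Stmt11Aux

variable {E : Type*} [NormedAddCommGroup E] [InnerProductSpace ℂ E]


variable {E : Type*} [NormedAddCommGroup E] [InnerProductSpace ℂ E]

lemma re_inner_le_norm' (x y : E) : (⟪x, y⟫_ℂ).re ≤ ‖x‖ * ‖y‖ := by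
  simpa using re_inner_le_norm (𝕜 := ℂ) x y

lemma re_inner_self' (x : E) : (⟪x, x⟫_ℂ).re = ‖x‖ ^ 2 := by
  simpa using inner_self_eq_norm_sq (𝕜 := ℂ) x

/-- Generalized Cauchy-Schwarz: for a symmetric operator with nonnegative form,
`‖S v‖ ^ 2 ≤ M * re ⟪S v, v⟫`. -/
lemma sq_norm_le (S : E →ₗ[ℂ] E) (hsym : ∀ x y : E, ⟪S x, y⟫_ℂ = ⟪x, S y⟫_ℂ)
    (hnn : ∀ v : E, 0 ≤ (⟪S v, v⟫_ℂ).re) {M : ℝ} (hM0 : 0 ≤ M)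
    (hM : ∀ v : E, ‖S v‖ ≤ M * ‖v‖) (v : E) :
    ‖S v‖ ^ 2 ≤ M * (⟪S v, v⟫_ℂ).re := by
  set w := S v with hw
  set a := (⟪S w, w⟫_ℂ).re with ha
  set c := (⟪S v, v⟫_ℂ).re with hc
  have hc0 : 0 ≤ c := hnn v
  have hkey : ∀ t : ℝ, 0 ≤ a * (t * t) + (2 * ‖w‖ ^ 2) * t + c := by
    intro t
    have hC : ⟪S (v + (t : ℂ) • w), v + (t : ℂ) • w⟫_ℂ
        = ⟪S v, v⟫_ℂ + (t : ℂ) * (⟪S v, w⟫_ℂ + ⟪S w, v⟫_ℂ) + (t : ℂ) ^ 2 * ⟪S w, w⟫_ℂ := by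
      rw [map_add, map_smul]
      simp only [inner_add_left, inner_add_right, inner_smul_left, inner_smul_right,
        Complex.conj_ofReal]
      ring
    have hcross : ⟪S v, w⟫_ℂ + ⟪S w, v⟫_ℂ = 2 * (‖w‖ : ℂ) ^ 2 := by
      have h1 : ⟪S v, w⟫_ℂ = ⟪w, w⟫_ℂ := by rw [hw]
      have h2 : ⟪S w, v⟫_ℂ = ⟪w, w⟫_ℂ := by rw [hsym w v, ← hw]
      rw [h1, h2, inner_self_eq_norm_sq_to_K]
      ring_nf
      rfl
    have := hnn (v + (t : ℂ) • w)
    rw [hC, hcross] at this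
    have hre : (⟪S v, v⟫_ℂ + (t : ℂ) * (2 * (‖w‖ : ℂ) ^ 2) + (t : ℂ) ^ 2 * ⟪S w, w⟫_ℂ).re
        = c + t * (2 * ‖w‖ ^ 2) + t ^ 2 * a := by
      simp [Complex.add_re, Complex.mul_re, ← Complex.ofReal_pow, Complex.ofReal_re,
        Complex.ofReal_im]
      rfl
    rw [hre] at this
    nlinarith [this]
  have hdisc := discrim_le_zero hkey
  rw [discrim] at hdisc
  have haM : a ≤ M * ‖w‖ ^ 2 := by
    have h1 : a ≤ ‖S w‖ * ‖w‖ := re_inner_le_norm' (S w) w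
    have h2 : ‖S w‖ ≤ M * ‖w‖ := hM w
    nlinarith [norm_nonneg w]
  rcases eq_or_lt_of_le (norm_nonneg w) with h0 | h0
  · have hw0 : ‖w‖ = 0 := h0.symm
    have : ‖S v‖ = 0 := by rw [← hw]; exact hw0
    rw [this]
    have := mul_nonneg hM0 hc0
    nlinarith
  · -- ‖w‖ > 0
    have h4 : (2 * ‖w‖ ^ 2) ^ 2 - 4 * a * c ≤ 0 := hdisc
    have h5 : ‖w‖ ^ 2 * ‖w‖ ^ 2 ≤ a * c := by nlinarith
    have h6 : a * c ≤ M * ‖w‖ ^ 2 * c := by nlinarith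
    have h7 : ‖w‖ ^ 2 * ‖w‖ ^ 2 ≤ (M * c) * ‖w‖ ^ 2 := by nlinarith
    have h8 : ‖w‖ ^ 2 ≤ M * c := by
      have hpos : 0 < ‖w‖ ^ 2 := by positivity
      exact le_of_mul_le_mul_right (by nlinarith) hpos
    exact h8

/-- A linear operator on a submodule of a complete space which is bounded below,
has trivial "orthogonal complement of range", and closed graph, is surjective. -/
lemma key_surj [CompleteSpace E] (V : Submodule ℂ E) (L : V →ₗ[ℂ] E) {δ : ℝ} (hδ : 0 < δ)
    (hlb : ∀ g : V, δ * ‖(g : E)‖ ≤ ‖L g‖)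
    (horth : ∀ h : E, (∀ g : V, ⟪L g, h⟫_ℂ = 0) → h = 0)
    (hgraph : ∀ (u : ℕ → V) (x y : E),
      Filter.Tendsto (fun n => ((u n : E))) Filter.atTop (nhds x) →
      Filter.Tendsto (fun n => L (u n)) Filter.atTop (nhds y) →
      ∃ hx : x ∈ V, L ⟨x, hx⟩ = y) :
    Function.Surjective L := by
  rw [← LinearMap.range_eq_top]
  have hclosed : IsClosed ((LinearMap.range L : Submodule ℂ E) : Set E) := by
    apply IsSeqClosed.isClosed
    intro u' p hu' hup
    choose g hg using fun n => LinearMap.mem_range.mp (hu' n)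
    have hcauchy : CauchySeq (fun n => ((g n : E))) := by
      rw [Metric.cauchySeq_iff]
      have hc' := hup.cauchySeq
      rw [Metric.cauchySeq_iff] at hc'
      intro ε hε
      obtain ⟨N, hN⟩ := hc' (δ * ε) (by positivity)
      refine ⟨N, fun m hm n hn => ?_⟩
      have h1 : δ * ‖((g m : E)) - ((g n : E))‖ ≤ ‖L (g m - g n)‖ := by
        simpa using hlb (g m - g n)
      have h2 : L (g m - g n) = u' m - u' n := by rw [map_sub, hg, hg]
      rw [h2] at h1
      have h3 := hN m hm n hn
      rw [dist_eq_norm] at h3 ⊢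
      have h4 : δ * ‖(g m : E) - (g n : E)‖ < δ * ε := lt_of_le_of_lt h1 h3
      exact lt_of_mul_lt_mul_left h4 hδ.le
    obtain ⟨x, hx⟩ := cauchySeq_tendsto_of_complete hcauchy
    have hL : Filter.Tendsto (fun n => L (g n)) Filter.atTop (nhds p) := by
      have : (fun n => L (g n)) = u' := funext hg
      rw [this]; exact hup
    obtain ⟨hxV, hLx⟩ := hgraph g x p hx hL
    exact LinearMap.mem_range.mpr ⟨⟨x, hxV⟩, hLx⟩
  haveI : CompleteSpace (LinearMap.range L : Submodule ℂ E) := hclosed.completeSpace_coe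
  rw [← Submodule.orthogonal_eq_bot_iff]
  rw [Submodule.eq_bot_iff]
  intro v hv
  apply horth
  intro g
  exact (Submodule.mem_orthogonal _ v).mp hv (L g) (LinearMap.mem_range_self L g)

lemma pmap_congr (B : E →ₗ.[ℂ] E) {x y : E} (hx : x ∈ B.domain) (hy : y ∈ B.domain)
    (h : x = y) : B ⟨x, hx⟩ = B ⟨y, hy⟩ := by subst h; rfl

lemma pmap_apply_congr {S T : E →ₗ.[ℂ] E} (h : S = T) (x : S.domain)
    (hx : (x : E) ∈ T.domain) : S x = T ⟨x, hx⟩ := by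
  subst h; rfl

lemma sa_symm [CompleteSpace E] {A : E →ₗ.[ℂ] E} (hA : IsSelfAdjoint A) (x y : A.domain) :
    ⟪A x, (y : E)⟫_ℂ = ⟪(x : E), A y⟫_ℂ := by
  have hd : Dense (A.domain : Set E) := hA.dense_domain
  have heq : A.adjoint = A := LinearPMap.isSelfAdjoint_def.mp hA
  have hdom : A.adjoint.domain = A.domain := congrArg LinearPMap.domain heq
  have hx' : (x : E) ∈ A.adjoint.domain := hdom.symm ▸ x.2
  have hFA := LinearPMap.adjoint_isFormalAdjoint hd (⟨(x : E), hx'⟩ : A.adjoint.domain) y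
  have hval : A.adjoint ⟨(x : E), hx'⟩ = A x := pmap_apply_congr heq ⟨(x : E), hx'⟩ x.2
  rw [hval] at hFA
  exact hFA



variable {E : Type*} [NormedAddCommGroup E] [InnerProductSpace ℂ E]

lemma stepA [CompleteSpace E] {A₀ : E →ₗ.[ℂ] E} (hA₀sa : IsSelfAdjoint A₀) {σ₀ : ℝ}
    (hA₀lb : ∀ f : A₀.domain, σ₀ * ‖(f : E)‖ ^ 2 ≤ (⟪A₀ f, (f : E)⟫_ℂ).re)
    {l : ℝ} (hl : l < σ₀) (h : E) :
    ∃ g : A₀.domain, A₀ g - (l : ℂ) • ((g : E)) = h := by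
  set δ := σ₀ - l with hδdef
  have hδ : 0 < δ := by simp only [hδdef]; linarith
  set L : A₀.domain →ₗ[ℂ] E := A₀.toFun - (l : ℂ) • A₀.domain.subtype with hL
  have hLapp : ∀ g : A₀.domain, L g = A₀ g - (l : ℂ) • ((g : E)) := fun g => rfl
  have hd : Dense (A₀.domain : Set E) := hA₀sa.dense_domain
  have heq : A₀.adjoint = A₀ := LinearPMap.isSelfAdjoint_def.mp hA₀sa
  have hdom : A₀.adjoint.domain = A₀.domain := congrArg LinearPMap.domain heq
  have hsym : ∀ x y : A₀.domain, ⟪A₀ x, (y : E)⟫_ℂ = ⟪(x : E), A₀ y⟫_ℂ := sa_symm hA₀sa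
  -- the form lower bound
  have hform : ∀ g : A₀.domain, δ * ‖(g : E)‖ ^ 2 ≤ (⟪L g, (g : E)⟫_ℂ).re := by
    intro g
    have hre : (⟪L g, (g : E)⟫_ℂ).re = (⟪A₀ g, (g : E)⟫_ℂ).re - l * ‖(g : E)‖ ^ 2 := by
      rw [hLapp, inner_sub_left, inner_smul_left, Complex.conj_ofReal, Complex.sub_re,
        Complex.re_ofReal_mul, re_inner_self']
    have := hA₀lb g
    rw [hre]
    nlinarith
  have hlb : ∀ g : A₀.domain, δ * ‖(g : E)‖ ≤ ‖L g‖ := by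
    intro g
    have h1 := hform g
    have h2 : (⟪L g, (g : E)⟫_ℂ).re ≤ ‖L g‖ * ‖(g : E)‖ := re_inner_le_norm' _ _
    rcases eq_or_lt_of_le (norm_nonneg ((g : E))) with h0 | h0
    · rw [← h0]; simp
    · have h3 : δ * ‖(g : E)‖ * ‖(g : E)‖ ≤ ‖L g‖ * ‖(g : E)‖ := by nlinarith
      exact le_of_mul_le_mul_right h3 h0
  have horth : ∀ w : E, (∀ g : A₀.domain, ⟪L g, w⟫_ℂ = 0) → w = 0 := by
    intro w hor
    have hmem' : w ∈ A₀.adjoint.domain := by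
      apply LinearPMap.mem_adjoint_domain_of_exists
      refine ⟨(l : ℂ) • w, fun x => ?_⟩
      have h1 : ⟪w, L x⟫_ℂ = 0 := by rw [← inner_conj_symm, hor x]; simp
      have h2 : ⟪w, A₀ x⟫_ℂ = ⟪w, L x⟫_ℂ + (l : ℂ) * ⟪w, (x : E)⟫_ℂ := by
        rw [hLapp, inner_sub_right, inner_smul_right]; ring
      rw [h2, h1, zero_add, inner_smul_left, Complex.conj_ofReal]
    have hmem : w ∈ A₀.domain := hdom ▸ hmem'
    have h0 : ⟪L ⟨w, hmem⟩, w⟫_ℂ = 0 := hor ⟨w, hmem⟩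
    have h1 := hform ⟨w, hmem⟩
    rw [show ((⟨w, hmem⟩ : A₀.domain) : E) = w from rfl, h0] at h1
    simp only [Complex.zero_re] at h1
    have h2 : ‖w‖ ^ 2 ≤ 0 := by nlinarith
    have h3 : ‖w‖ = 0 := by nlinarith [norm_nonneg w, sq_nonneg ‖w‖]
    exact norm_eq_zero.mp h3
  have hgraph : ∀ (u : ℕ → A₀.domain) (x y : E),
      Filter.Tendsto (fun n => ((u n : E))) Filter.atTop (nhds x) →
      Filter.Tendsto (fun n => L (u n)) Filter.atTop (nhds y) →
      ∃ hx : x ∈ A₀.domain, L ⟨x, hx⟩ = y := by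
    intro u x y hux huy
    set y' := y + (l : ℂ) • x with hy'
    have hAu : Filter.Tendsto (fun n => A₀ (u n)) Filter.atTop (nhds y') := by
      have heqn : (fun n => A₀ (u n)) = fun n => L (u n) + (l : ℂ) • ((u n : E)) := by
        funext n; rw [hLapp]; simp
      rw [heqn, hy']
      exact huy.add (hux.const_smul ((l : ℂ)))
    have hx₀ : ∀ v : A₀.domain, ⟪y', (v : E)⟫_ℂ = ⟪x, A₀ v⟫_ℂ := by
      intro v
      have t1 : Filter.Tendsto (fun n => ⟪(u n : E), A₀ v⟫_ℂ) Filter.atTop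
          (nhds ⟪x, A₀ v⟫_ℂ) := hux.inner tendsto_const_nhds
      have t2 : Filter.Tendsto (fun n => ⟪A₀ (u n), (v : E)⟫_ℂ) Filter.atTop
          (nhds ⟪y', (v : E)⟫_ℂ) := hAu.inner tendsto_const_nhds
      have heqn : (fun n => ⟪A₀ (u n), (v : E)⟫_ℂ) = fun n => ⟪(u n : E), A₀ v⟫_ℂ := by
        funext n; exact hsym (u n) v
      rw [heqn] at t2
      exact (tendsto_nhds_unique t2 t1)
    have hxm' : x ∈ A₀.adjoint.domain :=
      LinearPMap.mem_adjoint_domain_of_exists x ⟨y', hx₀⟩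
    have hxm : x ∈ A₀.domain := hdom ▸ hxm'
    have hadj : A₀.adjoint ⟨x, hxm'⟩ = y' := LinearPMap.adjoint_apply_eq hd ⟨x, hxm'⟩ hx₀
    have hval : A₀ ⟨x, hxm⟩ = y' := by
      rw [← hadj]
      exact (pmap_apply_congr heq ⟨x, hxm'⟩ hxm).symm
    refine ⟨hxm, ?_⟩
    rw [hLapp, hval, hy']
    simp
  obtain ⟨g, hg⟩ := key_surj A₀.domain L hδ hlb horth hgraph h
  exact ⟨g, by rw [← hLapp]; exact hg⟩



variable {E : Type*} [NormedAddCommGroup E] [InnerProductSpace ℂ E]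

lemma re_inner_symm' (x y : E) : (⟪x, y⟫_ℂ).re = (⟪y, x⟫_ℂ).re := by
  rw [← inner_conj_symm y x]
  exact Complex.conj_re _

lemma norm_real_smul (r : ℝ) (v : E) : ‖(r : ℂ) • v‖ = |r| * ‖v‖ := by
  rw [norm_smul, Complex.norm_real, Real.norm_eq_abs]

lemma re_real_smul_inner (r : ℝ) (x y : E) :
    (⟪(r : ℂ) • x, y⟫_ℂ).re = r * (⟪x, y⟫_ℂ).re := by
  rw [inner_smul_left, Complex.conj_ofReal, Complex.re_ofReal_mul]

/-- The resolvent package: if `A - l` is "surjective" and `A` is symmetric, there is an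
everywhere-defined symmetric inverse. -/
lemma resolvent_pkg {A : E →ₗ.[ℂ] E}
    (hAsym : ∀ f g : A.domain, ⟪A f, (g : E)⟫_ℂ = ⟪(f : E), A g⟫_ℂ)
    {l : ℝ} (hsurj : ∀ h : E, ∃ f : A.domain, A f - (l : ℂ) • ((f : E)) = h) :
    ∃ R : E →ₗ[ℂ] E, (∀ x y : E, ⟪R x, y⟫_ℂ = ⟪x, R y⟫_ℂ)
      ∧ (∀ x : E, ∃ hf : R x ∈ A.domain, A ⟨R x, hf⟩ - (l : ℂ) • (R x) = x)
      ∧ (∀ f : A.domain, R (A f - (l : ℂ) • ((f : E))) = (f : E)) := by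
  set L : A.domain →ₗ[ℂ] E := A.toFun - (l : ℂ) • A.domain.subtype with hL
  have hLapp : ∀ g : A.domain, L g = A g - (l : ℂ) • ((g : E)) := fun g => rfl
  have hLsym : ∀ f g : A.domain, ⟪L f, (g : E)⟫_ℂ = ⟪(f : E), L g⟫_ℂ := by
    intro f g
    rw [hLapp, hLapp, inner_sub_left, inner_sub_right, inner_smul_left, inner_smul_right,
      Complex.conj_ofReal, hAsym f g]
  have hsurjL : Function.Surjective L := by
    intro h
    obtain ⟨f, hf⟩ := hsurj h
    exact ⟨f, by rw [hLapp]; exact hf⟩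
  have hinj : Function.Injective L := by
    intro a b hab
    have hsub : ⟪(a : E) - (b : E), (a : E) - (b : E)⟫_ℂ = 0 := by
      obtain ⟨p, hp⟩ := hsurjL ((a : E) - (b : E))
      have h1 : ⟪L (a - b), (p : E)⟫_ℂ = 0 := by
        rw [map_sub, hab, sub_self, inner_zero_left]
      have h2 : ⟪((a - b : A.domain) : E), L p⟫_ℂ = 0 := by rw [← hLsym]; exact h1
      rw [hp] at h2
      simpa [Submodule.coe_sub] using h2
    have h3 : (a : E) - (b : E) = 0 := inner_self_eq_zero.mp hsub
    exact Subtype.ext (sub_eq_zero.mp h3)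
  set e := LinearEquiv.ofBijective L ⟨hinj, hsurjL⟩ with he
  set R : E →ₗ[ℂ] E := (A.domain.subtype).comp (e.symm.toLinearMap) with hR
  have hRapp : ∀ x : E, R x = ((e.symm x : A.domain) : E) := fun x => rfl
  have heL : ∀ f : A.domain, e f = L f := fun f => rfl
  have hinv : ∀ f : A.domain, R (A f - (l : ℂ) • ((f : E))) = (f : E) := by
    intro f
    rw [← hLapp, hRapp, ← heL, LinearEquiv.symm_apply_apply]
  have hres : ∀ x : E, ∃ hf : R x ∈ A.domain, A ⟨R x, hf⟩ - (l : ℂ) • (R x) = x := by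
    intro x
    have hmem : R x ∈ A.domain := (e.symm x).2
    refine ⟨hmem, ?_⟩
    have hmk : (⟨R x, hmem⟩ : A.domain) = e.symm x := Subtype.ext (hRapp x)
    rw [hmk]
    calc A (e.symm x) - (l : ℂ) • (R x) = L (e.symm x) := (hLapp (e.symm x)).symm
      _ = x := by rw [← heL, LinearEquiv.apply_symm_apply]
  refine ⟨R, ?_, hres, hinv⟩
  intro x y
  obtain ⟨p, hp⟩ := hsurjL x
  obtain ⟨q, hq⟩ := hsurjL y
  have hxp : R x = (p : E) := by rw [← hp, hRapp, ← heL, LinearEquiv.symm_apply_apply]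
  have hyq : R y = (q : E) := by rw [← hq, hRapp, ← heL, LinearEquiv.symm_apply_apply]
  rw [hxp, hyq, ← hp, ← hq]
  exact (hLsym p q).symm



variable {E : Type*} [NormedAddCommGroup E] [InnerProductSpace ℂ E]

set_option maxHeartbeats 1000000 in
/-- If `A - l` is surjective for all `l < lam` and `A` is symmetric, then the quadratic form
of `A` is bounded below by `lam`. -/
lemma stepC [CompleteSpace E] {A : E →ₗ.[ℂ] E}
    (hAsym : ∀ f g : A.domain, ⟪A f, (g : E)⟫_ℂ = ⟪(f : E), A g⟫_ℂ)
    {lam : ℝ}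
    (hsurj : ∀ l : ℝ, l < lam → ∀ h : E, ∃ f : A.domain, A f - (l : ℂ) • ((f : E)) = h) :
    ∀ l : ℝ, l < lam → ∀ f : A.domain, l * ‖(f : E)‖ ^ 2 ≤ (⟪A f, (f : E)⟫_ℂ).re := by
  intro l hl f
  obtain ⟨R, hRsym, hRres, hRinv⟩ := resolvent_pkg hAsym (hsurj l hl)
  have hRcont : Continuous R := LinearMap.IsSymmetric.continuous hRsym
  set RC : E →L[ℂ] E := ⟨R, hRcont⟩ with hRC
  have hRbd : ∀ v : E, ‖R v‖ ≤ ‖RC‖ * ‖v‖ := fun v => RC.le_opNorm v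
  -- positivity of R
  have hpos : ∀ v : E, 0 ≤ (⟪R v, v⟫_ℂ).re := by
    by_contra hcon
    push_neg at hcon
    obtain ⟨g, hg⟩ := hcon
    have hg0 : g ≠ 0 := by
      rintro rfl
      simp at hg
    set c : ℝ := ‖g‖⁻¹ with hc
    have hgn : ‖g‖ ≠ 0 := norm_ne_zero_iff.mpr hg0
    have hcpos : 0 < c := inv_pos.mpr (norm_pos_iff.mpr hg0)
    set gh : E := (c : ℂ) • g with hgh
    have hghnorm : ‖gh‖ = 1 := by
      rw [hgh, norm_real_smul, abs_of_pos hcpos, hc, inv_mul_cancel₀ hgn]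
    have hghneg : (⟪R gh, gh⟫_ℂ).re < 0 := by
      have hexp : (⟪R gh, gh⟫_ℂ).re = c * (c * (⟪R g, g⟫_ℂ).re) := by
        rw [hgh, map_smul, re_real_smul_inner, inner_smul_right]
        rw [show ((c : ℂ) * ⟪R g, g⟫_ℂ).re = c * (⟪R g, g⟫_ℂ).re from
          Complex.re_ofReal_mul _ _]
      rw [hexp]
      have h1 : c * (⟪R g, g⟫_ℂ).re < 0 := mul_neg_of_pos_of_neg hcpos hg
      exact mul_neg_of_pos_of_neg hcpos h1
    -- the infimum of the quadratic form on the unit sphere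
    set S : Set ℝ := {r : ℝ | ∃ v : E, ‖v‖ = 1 ∧ r = (⟪R v, v⟫_ℂ).re} with hS
    have hne : S.Nonempty := ⟨(⟪R gh, gh⟫_ℂ).re, gh, hghnorm, rfl⟩
    have hbdd : BddBelow S := by
      refine ⟨-‖RC‖, fun r hr => ?_⟩
      obtain ⟨v, hv1, rfl⟩ := hr
      have h1 : |(⟪R v, v⟫_ℂ).re| ≤ ‖R v‖ * ‖v‖ := by
        calc |(⟪R v, v⟫_ℂ).re| ≤ ‖⟪R v, v⟫_ℂ‖ := Complex.abs_re_le_norm _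
          _ = ‖⟪R v, v⟫_ℂ‖ := rfl
          _ ≤ ‖R v‖ * ‖v‖ := norm_inner_le_norm _ _
      have h2 : ‖R v‖ * ‖v‖ ≤ ‖RC‖ := by
        have := hRbd v
        rw [hv1] at this ⊢
        simpa using this
      have := abs_le.mp (le_trans h1 h2)
      linarith [this.1]
    set m := sInf S with hm
    have hmle : m ≤ (⟪R gh, gh⟫_ℂ).re := csInf_le hbdd ⟨gh, hghnorm, rfl⟩
    have hmneg : m < 0 := lt_of_le_of_lt hmle hghneg
    set s : ℝ := -m with hsdef
    have hspos : 0 < s := by rw [hsdef]; linarith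
    -- the form bound from the infimum
    have hform : ∀ v : E, m * ‖v‖ ^ 2 ≤ (⟪R v, v⟫_ℂ).re := by
      intro v
      rcases eq_or_ne v 0 with rfl | hv0
      · simp
      · set cv : ℝ := ‖v‖⁻¹ with hcv
        have hvn : ‖v‖ ≠ 0 := norm_ne_zero_iff.mpr hv0
        have hcvpos : 0 < cv := inv_pos.mpr (norm_pos_iff.mpr hv0)
        set vh : E := (cv : ℂ) • v with hvh
        have hvhnorm : ‖vh‖ = 1 := by
          rw [hvh, norm_real_smul, abs_of_pos hcvpos, hcv, inv_mul_cancel₀ hvn]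
        have hminner : (⟪R vh, vh⟫_ℂ).re = cv ^ 2 * (⟪R v, v⟫_ℂ).re := by
          rw [hvh, map_smul, re_real_smul_inner, inner_smul_right]
          rw [show ((cv : ℂ) * ⟪R v, v⟫_ℂ).re = cv * (⟪R v, v⟫_ℂ).re from
            Complex.re_ofReal_mul _ _]
          ring
        have h1 : m ≤ cv ^ 2 * (⟪R v, v⟫_ℂ).re := by
          rw [← hminner]
          exact csInf_le hbdd ⟨vh, hvhnorm, rfl⟩
        have h2 : cv ^ 2 * ‖v‖ ^ 2 = 1 := by
          rw [hcv, ← mul_pow, inv_mul_cancel₀ hvn, one_pow]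
        have hnv : 0 < ‖v‖ ^ 2 := by positivity
        have h4 : cv ^ 2 * (⟪R v, v⟫_ℂ).re * ‖v‖ ^ 2
            = (⟪R v, v⟫_ℂ).re * (cv ^ 2 * ‖v‖ ^ 2) := by ring
        rw [h2, mul_one] at h4
        have h5 := mul_le_mul_of_nonneg_right h1 hnv.le
        rw [h4] at h5
        linarith
    -- second resolvent at l - 1/s
    set σp : ℝ := 1 / s with hσp
    have hσppos : 0 < σp := by rw [hσp]; exact one_div_pos.mpr hspos
    have hl' : l - σp < lam := by linarith
    obtain ⟨R', hR'sym, hR'res, hR'inv⟩ := resolvent_pkg hAsym (hsurj (l - σp) hl')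
    have hR'cont : Continuous R' := LinearMap.IsSymmetric.continuous hR'sym
    set RC' : E →L[ℂ] E := ⟨R', hR'cont⟩ with hRC'
    set cpr : ℝ := ‖RC'‖ with hcpr
    have hR'bd : ∀ v : E, ‖R' v‖ ≤ cpr * ‖v‖ := fun v => RC'.le_opNorm v
    have hcpr0 : 0 ≤ cpr := norm_nonneg _
    -- the resolvent identity : R x = R' x + σp • R' (R x)
    have hres : ∀ x : E, R x = R' x + ((σp : ℝ) : ℂ) • R' (R x) := by
      intro x
      obtain ⟨hfmem, hfeq⟩ := hRres x
      have h1 : A ⟨R x, hfmem⟩ - ((l - σp : ℝ) : ℂ) • (R x) = x + ((σp : ℝ) : ℂ) • R x := by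
        rw [show ((l - σp : ℝ) : ℂ) = (l : ℂ) - ((σp : ℝ) : ℂ) by push_cast; ring, sub_smul]
        have h2 : A ⟨R x, hfmem⟩ - ((l : ℂ) • R x - ((σp : ℝ) : ℂ) • R x)
            = (A ⟨R x, hfmem⟩ - (l : ℂ) • R x) + ((σp : ℝ) : ℂ) • R x := by abel
        rw [h2, hfeq]
      have h3 := hR'inv ⟨R x, hfmem⟩
      rw [show (((⟨R x, hfmem⟩ : A.domain)) : E) = R x from rfl] at h3
      rw [h1] at h3
      conv_lhs => rw [← h3]
      rw [map_add, map_smul]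
    -- approximate eigenvector argument
    set τ : ℝ := s / (1 + cpr * σp) with hτ
    have hden : 0 < 1 + cpr * σp := by nlinarith
    have hτpos : 0 < τ := div_pos hspos hden
    -- the operator S₀ = R - m • id with nonnegative form
    set S₀ : E →ₗ[ℂ] E := R - (m : ℂ) • LinearMap.id with hS₀
    have hS₀app : ∀ v : E, S₀ v = R v - (m : ℂ) • v := fun v => rfl
    have hS₀sym : ∀ x y : E, ⟪S₀ x, y⟫_ℂ = ⟪x, S₀ y⟫_ℂ := by
      intro x y
      rw [hS₀app, hS₀app, inner_sub_left, inner_sub_right, inner_smul_left, inner_smul_right,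
        Complex.conj_ofReal, hRsym x y]
    have hreS₀ : ∀ v : E, (⟪S₀ v, v⟫_ℂ).re = (⟪R v, v⟫_ℂ).re - m * ‖v‖ ^ 2 := by
      intro v
      rw [hS₀app, inner_sub_left, Complex.sub_re, re_real_smul_inner, re_inner_self']
    have hS₀nn : ∀ v : E, 0 ≤ (⟪S₀ v, v⟫_ℂ).re := by
      intro v
      rw [hreS₀]
      have := hform v
      linarith
    set M₁ : ℝ := ‖RC‖ + |m| with hM₁
    have hM₁0 : 0 ≤ M₁ := by positivity
    have hS₀bd : ∀ v : E, ‖S₀ v‖ ≤ M₁ * ‖v‖ := by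
      intro v
      rw [hS₀app]
      calc ‖R v - (m : ℂ) • v‖ ≤ ‖R v‖ + ‖(m : ℂ) • v‖ := norm_sub_le _ _
        _ ≤ ‖RC‖ * ‖v‖ + |m| * ‖v‖ := by
            have h1 := hRbd v
            have h2 : ‖(m : ℂ) • v‖ = |m| * ‖v‖ := norm_real_smul m v
            linarith
        _ = M₁ * ‖v‖ := by rw [hM₁]; ring
    -- choose an approximate minimizer
    set δ' : ℝ := τ ^ 2 / (M₁ + 1) with hδ'
    have hδ'pos : 0 < δ' := div_pos (pow_pos hτpos 2) (by linarith)
    obtain ⟨r, hrS, hrlt⟩ := exists_lt_of_csInf_lt hne (show m < m + δ' by linarith)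
    obtain ⟨v, hv1, rfl⟩ := hrS
    set εv : E := S₀ v with hεv
    have hεsq : ‖εv‖ ^ 2 ≤ M₁ * ((⟪R v, v⟫_ℂ).re - m) := by
      have h1 := sq_norm_le S₀ hS₀sym hS₀nn hM₁0 hS₀bd v
      rw [← hεv] at h1
      have heq : (⟪S₀ v, v⟫_ℂ).re = (⟪R v, v⟫_ℂ).re - m := by
        rw [hreS₀, hv1]; ring
      rw [heq] at h1
      exact h1
    have hεlt : ‖εv‖ < τ := by
      have h1 : ‖εv‖ ^ 2 ≤ M₁ * δ' := le_trans hεsq (by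
        nlinarith [mul_nonneg hM₁0 (show (0:ℝ) ≤ δ' - ((⟪R v, v⟫_ℂ).re - m) by linarith)])
      have h2 : M₁ * δ' < (M₁ + 1) * δ' := by nlinarith
      have h3 : (M₁ + 1) * δ' = τ ^ 2 := by
        rw [hδ', mul_div_assoc', mul_comm, mul_div_assoc, div_self (by linarith : M₁ + 1 ≠ 0),
          mul_one]
      by_contra hcon2
      push_neg at hcon2
      nlinarith
    -- contradiction via the resolvent identity
    have hRv : R v = (m : ℂ) • v + εv := by
      rw [hεv, hS₀app]; abel
    have hkey := hres v
    rw [hRv, map_add, map_smul, smul_add] at hkey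
    have hms : ((σp : ℝ) : ℂ) • ((m : ℂ) • R' v) = -R' v := by
      rw [smul_smul, show ((σp : ℝ) : ℂ) * (m : ℂ) = ((σp * m : ℝ) : ℂ) by push_cast; ring,
        show σp * m = -1 by rw [hσp, hsdef]; field_simp; rw [div_self hmneg.ne]]
      simp
    rw [hms] at hkey
    -- hkey : m•v + εv = R' v + (-R' v + σp • R' εv)
    have hfinal : (m : ℂ) • v = ((σp : ℝ) : ℂ) • R' εv - εv := by
      rw [add_neg_cancel_left] at hkey
      exact eq_sub_of_add_eq hkey
    have hnorm1 : ‖(m : ℂ) • v‖ = s := by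
      rw [norm_real_smul, hv1, mul_one, hsdef, abs_of_neg hmneg]
    have hnorm2 : ‖((σp : ℝ) : ℂ) • R' εv - εv‖ ≤ σp * (cpr * ‖εv‖) + ‖εv‖ := by
      calc ‖((σp : ℝ) : ℂ) • R' εv - εv‖ ≤ ‖((σp : ℝ) : ℂ) • R' εv‖ + ‖εv‖ := norm_sub_le _ _
        _ ≤ σp * (cpr * ‖εv‖) + ‖εv‖ := by
            have h1 : ‖((σp : ℝ) : ℂ) • R' εv‖ = σp * ‖R' εv‖ := by
              rw [norm_real_smul, abs_of_pos hσppos]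
            have h2 := hR'bd εv
            have h3 : σp * ‖R' εv‖ ≤ σp * (cpr * ‖εv‖) :=
              mul_le_mul_of_nonneg_left h2 hσppos.le
            linarith [h1 ▸ h3]
    have hcontr : s ≤ (σp * cpr + 1) * ‖εv‖ := by
      rw [← hnorm1, hfinal]
      calc ‖((σp : ℝ) : ℂ) • R' εv - εv‖ ≤ σp * (cpr * ‖εv‖) + ‖εv‖ := hnorm2
        _ = (σp * cpr + 1) * ‖εv‖ := by ring
    have hlt : (σp * cpr + 1) * ‖εv‖ < (σp * cpr + 1) * τ := by
      have hp : 0 < σp * cpr + 1 := by nlinarith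
      exact mul_lt_mul_of_pos_left hεlt hp
    have hτs : (σp * cpr + 1) * τ = s := by
      rw [hτ]
      field_simp
      ring
    linarith
  -- conclude the form bound
  have h1 := hRinv f
  have h2 := hpos (A f - (l : ℂ) • ((f : E)))
  rw [h1] at h2
  have h3 : (⟪(f : E), A f - (l : ℂ) • ((f : E))⟫_ℂ).re
      = (⟪A f, (f : E)⟫_ℂ).re - l * ‖(f : E)‖ ^ 2 := by
    rw [inner_sub_right, Complex.sub_re, inner_smul_right,
      show ((l : ℂ) * ⟪(f : E), (f : E)⟫_ℂ).re = l * (⟪(f : E), (f : E)⟫_ℂ).re from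
        Complex.re_ofReal_mul _ _,
      re_inner_self', re_inner_symm']
  rw [h3] at h2
  linarith



variable {E : Type*} [NormedAddCommGroup E] [InnerProductSpace ℂ E]

/-- Surjectivity for an everywhere-defined continuous operator that is bounded below with
trivial orthogonal complement of the range. -/
lemma key_surj_full [CompleteSpace E] (L : E →ₗ[ℂ] E) (hcont : Continuous L) {δ : ℝ}
    (hδ : 0 < δ) (hlb : ∀ g : E, δ * ‖g‖ ≤ ‖L g‖)
    (horth : ∀ h : E, (∀ g : E, ⟪L g, h⟫_ℂ = 0) → h = 0) :
    Function.Surjective L := by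
  rw [← LinearMap.range_eq_top]
  have hclosed : IsClosed ((LinearMap.range L : Submodule ℂ E) : Set E) := by
    apply IsSeqClosed.isClosed
    intro u' p hu' hup
    choose g hg using fun n => LinearMap.mem_range.mp (hu' n)
    have hcauchy : CauchySeq g := by
      rw [Metric.cauchySeq_iff]
      have hc' := hup.cauchySeq
      rw [Metric.cauchySeq_iff] at hc'
      intro ε hε
      obtain ⟨N, hN⟩ := hc' (δ * ε) (by positivity)
      refine ⟨N, fun m hm n hn => ?_⟩
      have h1 : δ * ‖g m - g n‖ ≤ ‖L (g m - g n)‖ := hlb _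
      have h2 : L (g m - g n) = u' m - u' n := by rw [map_sub, hg, hg]
      rw [h2] at h1
      have h3 := hN m hm n hn
      rw [dist_eq_norm] at h3 ⊢
      have h4 : δ * ‖g m - g n‖ < δ * ε := lt_of_le_of_lt h1 h3
      exact lt_of_mul_lt_mul_left h4 hδ.le
    obtain ⟨x, hx⟩ := cauchySeq_tendsto_of_complete hcauchy
    have hL : Filter.Tendsto (fun n => L (g n)) Filter.atTop (nhds (L x)) :=
      (hcont.tendsto x).comp hx
    have : (fun n => L (g n)) = u' := funext hg
    rw [this] at hL
    have : L x = p := tendsto_nhds_unique hL hup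
    exact LinearMap.mem_range.mpr ⟨x, this⟩
  haveI : CompleteSpace (LinearMap.range L : Submodule ℂ E) := hclosed.completeSpace_coe
  rw [← Submodule.orthogonal_eq_bot_iff, Submodule.eq_bot_iff]
  intro v hv
  apply horth
  intro g
  exact (Submodule.mem_orthogonal _ v).mp hv (L g) (LinearMap.mem_range_self L g)

lemma stepB
    {H G : Type*}
    [NormedAddCommGroup H] [InnerProductSpace ℂ H] [CompleteSpace H]
    [NormedAddCommGroup G] [InnerProductSpace ℂ G] [CompleteSpace G]
    (T : H →ₗ.[ℂ] H) (Γ₀ Γ₁ : T.domain →ₗ[ℂ] G)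
    (A₀ : H →ₗ.[ℂ] H) (hA₀sub : A₀.domain ≤ T.domain)
    (hA₀eq : ∀ f : A₀.domain, A₀ f = T ⟨f.1, hA₀sub f.2⟩)
    (hA₀dom : ∀ x (hx : x ∈ T.domain), x ∈ A₀.domain ↔ Γ₀ ⟨x, hx⟩ = 0)
    (hA₀sa : IsSelfAdjoint A₀) (σ₀ : ℝ)
    (hA₀lb : ∀ f : A₀.domain, σ₀ * ‖(f : H)‖ ^ 2 ≤ (⟪A₀ f, (f : H)⟫_ℂ).re)
    (Mbar : ℝ → (G →L[ℂ] G))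
    (hWeyl : ∀ l : ℝ, l < σ₀ → ∀ f : T.domain, T f = (l : ℂ) • (f : H) → Mbar l (Γ₀ f) = Γ₁ f)
    (R : ℝ → (G →L[ℂ] G))
    (hRsa : ∀ l : ℝ, l < σ₀ → IsSelfAdjoint (R l))
    (hRR : ∀ l : ℝ, l < σ₀ → R l ∘L R l = Mbar l)
    (B : G →ₗ.[ℂ] G) (hBsa : IsSelfAdjoint B)
    (hranR : ∀ l : ℝ, l < σ₀ → ∀ x : G, R l x ∈ B.domain)
    (hBM : ∀ (l : ℝ), l < σ₀ → ∀ (x : G) (h : Mbar l x ∈ B.domain),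
      B ⟨Mbar l x, h⟩ ∈ Set.range Γ₀)
    (hranΓ₁ : ∀ f : T.domain, Γ₁ f ∈ B.domain)
    (hBΓ₁ : ∀ f : T.domain, B ⟨Γ₁ f, hranΓ₁ f⟩ ∈ Set.range Γ₀)
    (A : H →ₗ.[ℂ] H) (hAsub : A.domain ≤ T.domain)
    (hAeq : ∀ f : A.domain, A f = T ⟨f.1, hAsub f.2⟩)
    (hAdom : ∀ x (hx : x ∈ T.domain),
      x ∈ A.domain ↔ Γ₀ ⟨x, hx⟩ = B ⟨Γ₁ ⟨x, hx⟩, hranΓ₁ ⟨x, hx⟩⟩)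
    (Bp : G →L[ℂ] G)
    (Bm : G →ₗ.[ℂ] G) (hBm_dom : Bm.domain = B.domain)
    (hBm_nn : ∀ φ : Bm.domain, 0 ≤ (⟪Bm φ, (φ : G)⟫_ℂ).re)
    (hdecomp : ∀ x : G, ∀ (hxB : x ∈ B.domain) (hxBm : x ∈ Bm.domain),
      B ⟨x, hxB⟩ = Bp x - Bm ⟨x, hxBm⟩)
    (l : ℝ) (hlσ : l < σ₀) (hq : ‖Bp‖ * ‖Mbar l‖ < 1) :
    ∀ h : H, ∃ f : A.domain, A f - (l : ℂ) • ((f : H)) = h := by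
  intro h
  have hA₀surj : ∀ w : H, ∃ g : A₀.domain, A₀ g - (l : ℂ) • ((g : H)) = w :=
    fun w => stepA hA₀sa hA₀lb hlσ w
  set Rl := R l with hRl
  have hRsym : ∀ x y : G, ⟪Rl x, y⟫_ℂ = ⟪x, Rl y⟫_ℂ := by
    intro x y
    calc ⟪Rl x, y⟫_ℂ = ⟪(ContinuousLinearMap.adjoint Rl) x, y⟫_ℂ := by
          rw [(hRsa l hlσ).adjoint_eq]
      _ = ⟪x, Rl y⟫_ℂ := ContinuousLinearMap.adjoint_inner_left Rl y x
  -- the operator K = Rl ∘ B ∘ Rl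
  set K : G →ₗ[ℂ] G := {
    toFun := fun x => Rl (B ⟨Rl x, hranR l hlσ x⟩)
    map_add' := by
      intro x y
      have h1 : (⟨Rl (x + y), hranR l hlσ (x + y)⟩ : B.domain)
          = ⟨Rl x, hranR l hlσ x⟩ + ⟨Rl y, hranR l hlσ y⟩ := by
        apply Subtype.ext
        simp [map_add]
      rw [h1, LinearPMap.map_add, map_add]
    map_smul' := by
      intro c x
      have h1 : (⟨Rl (c • x), hranR l hlσ (c • x)⟩ : B.domain)
          = c • ⟨Rl x, hranR l hlσ x⟩ := by
        apply Subtype.ext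
        simp [map_smul]
      rw [h1, LinearPMap.map_smul, map_smul]
      rfl } with hK
  have hKapp : ∀ x : G, K x = Rl (B ⟨Rl x, hranR l hlσ x⟩) := fun x => rfl
  have hBsym : ∀ x y : B.domain, ⟪B x, (y : G)⟫_ℂ = ⟪(x : G), B y⟫_ℂ := sa_symm hBsa
  have hKsym : ∀ x y : G, ⟪K x, y⟫_ℂ = ⟪x, K y⟫_ℂ := by
    intro x y
    rw [hKapp, hKapp, hRsym,
      hBsym ⟨Rl x, hranR l hlσ x⟩ ⟨Rl y, hranR l hlσ y⟩, ← hRsym]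
  have hKcont : Continuous K := LinearMap.IsSymmetric.continuous hKsym
  set q : ℝ := ‖Bp‖ * ‖Mbar l‖ with hqdef
  have hq0 : 0 ≤ q := by positivity
  have hKform : ∀ x : G, (⟪K x, x⟫_ℂ).re ≤ q * ‖x‖ ^ 2 := by
    intro x
    set v : G := Rl x with hv
    have hvB : v ∈ B.domain := hranR l hlσ x
    have hvBm : v ∈ Bm.domain := by rw [hBm_dom]; exact hvB
    have h1 : (⟪K x, x⟫_ℂ).re = (⟪B ⟨v, hvB⟩, v⟫_ℂ).re := by
      rw [hKapp, hRsym]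
    have h2 : B ⟨v, hvB⟩ = Bp v - Bm ⟨v, hvBm⟩ := hdecomp v hvB hvBm
    have h3 : (⟪B ⟨v, hvB⟩, v⟫_ℂ).re = (⟪Bp v, v⟫_ℂ).re - (⟪Bm ⟨v, hvBm⟩, v⟫_ℂ).re := by
      rw [h2, inner_sub_left, Complex.sub_re]
    have h4 : 0 ≤ (⟪Bm ⟨v, hvBm⟩, v⟫_ℂ).re := hBm_nn ⟨v, hvBm⟩
    have h5 : (⟪Bp v, v⟫_ℂ).re ≤ ‖Bp‖ * ‖v‖ ^ 2 := by
      calc (⟪Bp v, v⟫_ℂ).re ≤ ‖Bp v‖ * ‖v‖ := re_inner_le_norm' _ _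
        _ ≤ (‖Bp‖ * ‖v‖) * ‖v‖ :=
            mul_le_mul_of_nonneg_right (Bp.le_opNorm v) (norm_nonneg v)
        _ = ‖Bp‖ * ‖v‖ ^ 2 := by ring
    have h6 : ‖v‖ ^ 2 ≤ ‖Mbar l‖ * ‖x‖ ^ 2 := by
      have h7 : ‖v‖ ^ 2 = (⟪x, Mbar l x⟫_ℂ).re := by
        rw [← re_inner_self', hv, hRsym]
        have : Rl (Rl x) = Mbar l x := by rw [← hRR l hlσ]; rfl
        rw [this]
      rw [h7]
      calc (⟪x, Mbar l x⟫_ℂ).re ≤ ‖x‖ * ‖Mbar l x‖ := re_inner_le_norm' _ _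
        _ ≤ ‖x‖ * (‖Mbar l‖ * ‖x‖) :=
            mul_le_mul_of_nonneg_left ((Mbar l).le_opNorm x) (norm_nonneg x)
        _ = ‖Mbar l‖ * ‖x‖ ^ 2 := by ring
    have h8 : ‖Bp‖ * ‖v‖ ^ 2 ≤ ‖Bp‖ * (‖Mbar l‖ * ‖x‖ ^ 2) :=
      mul_le_mul_of_nonneg_left h6 (norm_nonneg _)
    rw [h1, h3, hqdef]
    nlinarith
  set J : G →ₗ[ℂ] G := LinearMap.id - K with hJ
  have hJapp : ∀ x : G, J x = x - K x := fun x => rfl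
  have hJform : ∀ x : G, (1 - q) * ‖x‖ ^ 2 ≤ (⟪J x, x⟫_ℂ).re := by
    intro x
    have h1 : (⟪J x, x⟫_ℂ).re = ‖x‖ ^ 2 - (⟪K x, x⟫_ℂ).re := by
      rw [hJapp, inner_sub_left, Complex.sub_re, re_inner_self']
    have := hKform x
    rw [h1]
    nlinarith
  have hJlb : ∀ x : G, (1 - q) * ‖x‖ ≤ ‖J x‖ := by
    intro x
    have h1 := hJform x
    have h2 : (⟪J x, x⟫_ℂ).re ≤ ‖J x‖ * ‖x‖ := re_inner_le_norm' _ _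
    rcases eq_or_lt_of_le (norm_nonneg x) with h0 | h0
    · rw [← h0]; simp
    · have h3 : (1 - q) * ‖x‖ * ‖x‖ ≤ ‖J x‖ * ‖x‖ := by nlinarith
      exact le_of_mul_le_mul_right h3 h0
  have hJorth : ∀ w : G, (∀ g : G, ⟪J g, w⟫_ℂ = 0) → w = 0 := by
    intro w hor
    have h1 := hJform w
    rw [hor w] at h1
    simp only [Complex.zero_re] at h1
    have h2 : 0 < 1 - q := by linarith
    have : ‖w‖ ^ 2 ≤ 0 := by nlinarith
    have : ‖w‖ = 0 := by nlinarith [norm_nonneg w, sq_nonneg ‖w‖]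
    exact norm_eq_zero.mp this
  have hJsurj : Function.Surjective J :=
    key_surj_full J (continuous_id.sub hKcont) (by linarith : (0:ℝ) < 1 - q) hJlb hJorth
  -- construct the solution
  obtain ⟨f₀', hf₀'⟩ := hA₀surj h
  set f₀ : T.domain := ⟨f₀'.1, hA₀sub f₀'.2⟩ with hf₀
  set ψ₀ : G := Γ₁ f₀ with hψ₀
  have hψ₀mem : ψ₀ ∈ B.domain := hranΓ₁ f₀
  set z : G := Rl (B ⟨ψ₀, hψ₀mem⟩) with hz
  obtain ⟨w, hw⟩ := hJsurj z
  set u : G := B ⟨ψ₀, hψ₀mem⟩ + B ⟨Rl w, hranR l hlσ w⟩ with hu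
  have hRu : Rl u = w := by
    rw [hu, map_add]
    have h1 : Rl (B ⟨Rl w, hranR l hlσ w⟩) = K w := rfl
    rw [h1, ← hz]
    have h2 : z + K w = w := by
      rw [← hw, hJapp]
      abel
    exact h2
  have hMu : Mbar l u = Rl w := by
    have h1 : Mbar l u = Rl (Rl u) := by rw [← hRR l hlσ]; rfl
    rw [h1, hRu]
  have hMumem : Mbar l u ∈ B.domain := by rw [hMu]; exact hranR l hlσ w
  have hBMu : B ⟨Mbar l u, hMumem⟩ = B ⟨Rl w, hranR l hlσ w⟩ :=
    pmap_congr B hMumem (hranR l hlσ w) hMu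
  have hsummem : ψ₀ + Mbar l u ∈ B.domain := add_mem hψ₀mem hMumem
  have huB : u = B ⟨ψ₀ + Mbar l u, hsummem⟩ := by
    have h1 : (⟨ψ₀ + Mbar l u, hsummem⟩ : B.domain) = ⟨ψ₀, hψ₀mem⟩ + ⟨Mbar l u, hMumem⟩ :=
      Subtype.ext rfl
    rw [h1, LinearPMap.map_add, hBMu, hu]
  -- u belongs to the range of Γ₀
  have hu_ran : u ∈ Set.range Γ₀ := by
    obtain ⟨p1, hp1⟩ := hBΓ₁ f₀
    obtain ⟨p2, hp2⟩ := hBM l hlσ u hMumem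
    refine ⟨p1 + p2, ?_⟩
    rw [map_add, hp1, hp2, hBMu]
  obtain ⟨gT, hgT⟩ := hu_ran
  -- decompose gT = g₀ + fl with fl ∈ ker (T - l)
  obtain ⟨g₀', hg₀'⟩ := hA₀surj (T gT - (l : ℂ) • ((gT : H)))
  set g₀ : T.domain := ⟨g₀'.1, hA₀sub g₀'.2⟩ with hg₀
  set fl : T.domain := gT - g₀ with hfl
  have hcoefl : ((fl : H)) = ((gT : H)) - ((g₀' : H)) := by rw [hfl]; rfl
  have hTfl : T fl = (l : ℂ) • ((fl : H)) := by
    rw [hfl, LinearPMap.map_sub]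
    have h1 : T g₀ = A₀ g₀' := (hA₀eq g₀').symm
    have h2 : A₀ g₀' = (T gT - (l : ℂ) • ((gT : H))) + (l : ℂ) • ((g₀' : H)) := by
      rw [← hg₀']; abel
    rw [h1, h2]
    have h3 : ((gT - g₀ : T.domain) : H) = ((gT : H)) - ((g₀' : H)) := rfl
    rw [h3, smul_sub]
    abel
  have hΓ₀g₀ : Γ₀ g₀ = 0 := (hA₀dom g₀'.1 (hA₀sub g₀'.2)).mp g₀'.2
  have hΓ₀fl : Γ₀ fl = u := by rw [hfl, map_sub, hgT, hΓ₀g₀, sub_zero]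
  have hΓ₁fl : Γ₁ fl = Mbar l u := by
    have h1 := hWeyl l hlσ fl hTfl
    rw [hΓ₀fl] at h1
    exact h1.symm
  set f : T.domain := f₀ + fl with hf
  have hΓ₀f₀ : Γ₀ f₀ = 0 := (hA₀dom f₀'.1 (hA₀sub f₀'.2)).mp f₀'.2
  have hΓ₀f : Γ₀ f = u := by rw [hf, map_add, hΓ₀f₀, hΓ₀fl, zero_add]
  have hΓ₁f : Γ₁ f = ψ₀ + Mbar l u := by rw [hf, map_add, hΓ₁fl, hψ₀]
  have hfA : ((f : H)) ∈ A.domain := by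
    apply (hAdom ((f : H)) f.2).mpr
    show Γ₀ f = B ⟨Γ₁ f, hranΓ₁ f⟩
    rw [hΓ₀f]
    have h1 : B ⟨Γ₁ f, hranΓ₁ f⟩ = B ⟨ψ₀ + Mbar l u, hsummem⟩ :=
      pmap_congr B (hranΓ₁ f) hsummem hΓ₁f
    rw [h1, ← huB]
  refine ⟨⟨(f : H), hfA⟩, ?_⟩
  have h1 : A ⟨(f : H), hfA⟩ = T f := hAeq ⟨(f : H), hfA⟩
  rw [h1]
  show T f - (l : ℂ) • ((f : H)) = h
  rw [hf, LinearPMap.map_add]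
  have h2 : T f₀ = A₀ f₀' := (hA₀eq f₀').symm
  rw [h2, hTfl]
  have h3 : ((f₀ + fl : T.domain) : H) = ((f₀' : H)) + ((fl : H)) := rfl
  rw [h3, smul_add]
  have h4 : A₀ f₀' + (l : ℂ) • ((fl : H)) - ((l : ℂ) • ((f₀' : H)) + (l : ℂ) • ((fl : H)))
      = A₀ f₀' - (l : ℂ) • ((f₀' : H)) := by abel
  rw [h4]
  exact hf₀'

end Stmt11Aux
open Stmt11Aux in
set_option maxHeartbeats 1000000 in
/-- Under the assumptions of the semiboundedness theorem, suppose
additionally that there exist `α ∈ (0,1]`, `μ ≤ min σ(A₀)` and `C > 0` with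
`‖Mbar λ‖ ≤ C/(μ − λ)^α` for all `λ < μ`.  Then
`min σ(A_[B]) ≥ μ − (C ‖B₊‖)^{1/α}`, where `B₊` is the (bounded) positive part
of `B`. -/
theorem stmt11
    {H G : Type*}
    [NormedAddCommGroup H] [InnerProductSpace ℂ H] [CompleteSpace H]
    [NormedAddCommGroup G] [InnerProductSpace ℂ G] [CompleteSpace G]
    (T : H →ₗ.[ℂ] H) (hTdense : Dense (T.domain : Set H))
    (Γ₀ Γ₁ : T.domain →ₗ[ℂ] G)
    -- abstract Green identity
    (hGreen : ∀ f g : T.domain,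
      ⟪T f, (g : H)⟫_ℂ - ⟪(f : H), T g⟫_ℂ = ⟪Γ₁ f, Γ₀ g⟫_ℂ - ⟪Γ₀ f, Γ₁ g⟫_ℂ)
    -- (Γ₀, Γ₁) has dense range
    (hdense : Dense (Set.range fun f : T.domain => (Γ₀ f, Γ₁ f)))
    -- A₀ = T ↾ ker Γ₀ is self-adjoint and bounded from below by σ₀
    (A₀ : H →ₗ.[ℂ] H) (hA₀sub : A₀.domain ≤ T.domain)
    (hA₀eq : ∀ f : A₀.domain, A₀ f = T ⟨f.1, hA₀sub f.2⟩)
    (hA₀dom : ∀ x (hx : x ∈ T.domain), x ∈ A₀.domain ↔ Γ₀ ⟨x, hx⟩ = 0)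
    (hA₀sa : IsSelfAdjoint A₀)
    (σ₀ : ℝ)
    (hA₀lb : ∀ f : A₀.domain, σ₀ * ‖(f : H)‖ ^ 2 ≤ (⟪A₀ f, (f : H)⟫_ℂ).re)
    -- Mbar λ is the (bounded) closure of the Weyl function M(λ) for λ < σ₀
    (Mbar : ℝ → (G →L[ℂ] G))
    (hWeyl : ∀ l : ℝ, l < σ₀ → ∀ f : T.domain,
      T f = (l : ℂ) • (f : H) → Mbar l (Γ₀ f) = Γ₁ f)
    -- (i) ‖Mbar λ‖ → 0 as λ → −∞
    (hdecay : Filter.Tendsto (fun l => ‖Mbar l‖) Filter.atBot (nhds 0))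
    -- R λ = (Mbar λ)^{1/2}, the non-negative square root
    (R : ℝ → (G →L[ℂ] G))
    (hRsa : ∀ l : ℝ, l < σ₀ → IsSelfAdjoint (R l))
    (hRnn : ∀ l : ℝ, l < σ₀ → ∀ x : G, 0 ≤ (⟪R l x, x⟫_ℂ).re)
    (hRR : ∀ l : ℝ, l < σ₀ → R l ∘L R l = Mbar l)
    -- B self-adjoint and bounded from above
    (B : G →ₗ.[ℂ] G) (hBsa : IsSelfAdjoint B)
    (hBub : ∃ c : ℝ, ∀ φ : B.domain, (⟪B φ, (φ : G)⟫_ℂ).re ≤ c * ‖(φ : G)‖ ^ 2)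
    -- (ii) ran (Mbar λ)^{1/2} ⊆ dom B for all λ < σ₀
    (hranR : ∀ l : ℝ, l < σ₀ → ∀ x : G, R l x ∈ B.domain)
    -- (iii) B (ran Mbar λ) ⊆ ran Γ₀ for all λ < σ₀
    (hBM : ∀ (l : ℝ), l < σ₀ → ∀ (x : G) (h : Mbar l x ∈ B.domain),
      B ⟨Mbar l x, h⟩ ∈ Set.range Γ₀)
    -- (iv) ran Γ₁ ⊆ dom B
    (hranΓ₁ : ∀ f : T.domain, Γ₁ f ∈ B.domain)
    -- (v) B (ran Γ₁) ⊆ ran Γ₀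
    (hBΓ₁ : ∀ f : T.domain, B ⟨Γ₁ f, hranΓ₁ f⟩ ∈ Set.range Γ₀)
    -- A = A_[B] = T ↾ {f ∈ dom T : Γ₀ f = B Γ₁ f}
    (A : H →ₗ.[ℂ] H) (hAsub : A.domain ≤ T.domain)
    (hAeq : ∀ f : A.domain, A f = T ⟨f.1, hAsub f.2⟩)
    (hAdom : ∀ x (hx : x ∈ T.domain),
      x ∈ A.domain ↔ Γ₀ ⟨x, hx⟩ = B ⟨Γ₁ ⟨x, hx⟩, hranΓ₁ ⟨x, hx⟩⟩)
    -- B = B₊ − B₋ via the spectral measure: B₊ bounded non-negative, B₋ ≥ 0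
    (Bp : G →L[ℂ] G) (hBp_sa : IsSelfAdjoint Bp) (hBp_nn : ∀ x : G, 0 ≤ (⟪Bp x, x⟫_ℂ).re)
    (Bm : G →ₗ.[ℂ] G) (hBm_dom : Bm.domain = B.domain)
    (hBm_nn : ∀ φ : Bm.domain, 0 ≤ (⟪Bm φ, (φ : G)⟫_ℂ).re)
    (hdecomp : ∀ x : G, ∀ (hxB : x ∈ B.domain) (hxBm : x ∈ Bm.domain),
      B ⟨x, hxB⟩ = Bp x - Bm ⟨x, hxBm⟩)
    -- the decay estimate ‖Mbar λ‖ ≤ C/(μ − λ)^α for λ < μ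
    (α : ℝ) (hα : α ∈ Set.Ioc (0 : ℝ) 1) (μ : ℝ) (hμ : μ ≤ σ₀) (C : ℝ) (hC : 0 < C)
    (hMdecay : ∀ l : ℝ, l < μ → ‖Mbar l‖ ≤ C / (μ - l) ^ α) :
    -- conclusion: min σ(A_[B]) ≥ μ − (C ‖B₊‖)^{1/α}
    ∀ f : A.domain,
      (μ - (C * ‖Bp‖) ^ (1 / α)) * ‖(f : H)‖ ^ 2 ≤ (⟪A f, (f : H)⟫_ℂ).re := by
  -- abbreviations
  set lam : ℝ := μ - (C * ‖Bp‖) ^ (1 / α) with hlam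
  have hα0 : 0 < α := hα.1
  have hCB0 : 0 ≤ C * ‖Bp‖ := by positivity
  have ht0 : 0 ≤ (C * ‖Bp‖) ^ (1 / α) := Real.rpow_nonneg hCB0 _
  have hlamμ : lam ≤ μ := by rw [hlam]; linarith
  -- A is symmetric
  have hAsym : ∀ f g : A.domain, ⟪A f, (g : H)⟫_ℂ = ⟪(f : H), A g⟫_ℂ := by
    intro f g
    set f' : T.domain := ⟨f.1, hAsub f.2⟩ with hf'
    set g' : T.domain := ⟨g.1, hAsub g.2⟩ with hg'
    have hGr := hGreen f' g'
    have hbf : Γ₀ f' = B ⟨Γ₁ f', hranΓ₁ f'⟩ := (hAdom f.1 (hAsub f.2)).mp f.2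
    have hbg : Γ₀ g' = B ⟨Γ₁ g', hranΓ₁ g'⟩ := (hAdom g.1 (hAsub g.2)).mp g.2
    have hBsym : ∀ x y : B.domain, ⟪B x, (y : G)⟫_ℂ = ⟪(x : G), B y⟫_ℂ := sa_symm hBsa
    have hzero : ⟪Γ₁ f', Γ₀ g'⟫_ℂ - ⟪Γ₀ f', Γ₁ g'⟫_ℂ = 0 := by
      rw [hbf, hbg]
      have := hBsym ⟨Γ₁ f', hranΓ₁ f'⟩ ⟨Γ₁ g', hranΓ₁ g'⟩
      rw [show ((⟨Γ₁ g', hranΓ₁ g'⟩ : B.domain) : G) = Γ₁ g' from rfl] at this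
      rw [show ((⟨Γ₁ f', hranΓ₁ f'⟩ : B.domain) : G) = Γ₁ f' from rfl] at this
      rw [← this, sub_self]
    rw [hzero] at hGr
    have h1 : A f = T f' := hAeq f
    have h2 : A g = T g' := hAeq g
    rw [h1, h2]
    have h3 : ((f : H)) = ((f' : H)) := rfl
    have h4 : ((g : H)) = ((g' : H)) := rfl
    rw [h3, h4]
    linear_combination hGr
  -- surjectivity of A - l for every l < lam
  have hsurjA : ∀ l : ℝ, l < lam →
      ∀ h : H, ∃ f : A.domain, A f - (l : ℂ) • ((f : H)) = h := by
    intro l hl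
    have hlμ : l < μ := lt_of_lt_of_le hl hlamμ
    have hlσ : l < σ₀ := lt_of_lt_of_le hlμ hμ
    have hμl : 0 < μ - l := by linarith
    -- the norm estimate
    have hkey : C * ‖Bp‖ < (μ - l) ^ α := by
      have h1 : (C * ‖Bp‖) ^ (1 / α) < μ - l := by rw [hlam] at hl; linarith
      have h2 := Real.rpow_lt_rpow (Real.rpow_nonneg hCB0 _) h1 hα0
      rwa [← Real.rpow_mul hCB0, one_div_mul_cancel hα0.ne', Real.rpow_one] at h2
    have hq : ‖Bp‖ * ‖Mbar l‖ < 1 := by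
      have hM := hMdecay l hlμ
      have h3 : ‖Bp‖ * ‖Mbar l‖ ≤ ‖Bp‖ * (C / (μ - l) ^ α) :=
        mul_le_mul_of_nonneg_left hM (norm_nonneg _)
      have hp : 0 < (μ - l) ^ α := Real.rpow_pos_of_pos hμl α
      have h4 : ‖Bp‖ * (C / (μ - l) ^ α) < 1 := by
        rw [mul_div_assoc']
        rw [div_lt_one hp]
        calc ‖Bp‖ * C = C * ‖Bp‖ := mul_comm _ _
          _ < (μ - l) ^ α := hkey
      linarith
    exact stepB T Γ₀ Γ₁ A₀ hA₀sub hA₀eq hA₀dom hA₀sa σ₀ hA₀lb Mbar hWeyl R hRsa hRR B hBsa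
      hranR hBM hranΓ₁ hBΓ₁ A hAsub hAeq hAdom Bp Bm hBm_dom hBm_nn hdecomp l hlσ hq
  -- form bound for every l < lam
  have hbound := stepC hAsym hsurjA
  -- pass to the limit l → lam
  intro f
  by_contra hcon
  push_neg at hcon
  set k : ℝ := ‖(f : H)‖ ^ 2 with hk
  have hk0 : 0 ≤ k := by positivity
  rcases eq_or_lt_of_le hk0 with h0 | h0
  · have h1 := hbound (lam - 1) (by linarith) f
    have h2 : ‖(f : H)‖ ^ 2 = 0 := by rw [← hk, ← h0]
    rw [h2] at h1
    rw [← h0] at hcon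
    simp only [mul_zero] at h1 hcon
    linarith
  · have h5 : (⟪A f, (f : H)⟫_ℂ).re / k < lam := by
      rw [div_lt_iff₀ h0]
      linarith
    set l : ℝ := ((⟪A f, (f : H)⟫_ℂ).re / k + lam) / 2 with hldef
    have hl1 : l < lam := by rw [hldef]; linarith
    have hl2 : (⟪A f, (f : H)⟫_ℂ).re / k < l := by rw [hldef]; linarith
    have h6 := hbound l hl1 f
    rw [← hk] at h6
    rw [div_lt_iff₀ h0] at hl2
    linarith
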